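/- Fix n, p ≥ 1, ν > 0, γ₂ ≥ 0, nonnegative weights u₁, …, u_p, data vectors x₁, …, x_p ∈ ℝⁿ, and for each pair l = (i₁, i₂) with 1 ≤ i₁ < i₂ ≤ n a vector ṽ_l ∈ ℝᵖ with entries ṽ_{jl}. Let ℰ be the set of all such pairs. For A ∈ ℝ^{n×p} with columns a₁, …, a_p and rows A_{1·}, …, A_{n·}, define f(A) = (1/2) Σ_{j=1}^p ‖x_j − a_j‖₂² + (ν/2) Σ_{l∈ℰ} ‖ṽ_l − A_{i₁·} + A_{i₂·}‖₂² + γ₂ Σ_{j=1}^p u_j ‖a_j‖₂. Let N = √(1+nν) I_n − ((√(1+nν) − 1)/n) 1_n 1_nᵀ, whose inverse is N⁻¹ = (1+nν)^{−1/2} [I_n + n^{−1}(√(1+nν) − 1) 1_n 1_nᵀ], and set y_j = N⁻¹ [x_j + ν Σ_{l∈ℰ} ṽ_{jl} (e_{i₁} − e_{i₂})] for each j = 1, …, p. Then A minimizes f over ℝ^{n×p} if and only if, for each j = 1, …, p, the column a_j minimizes the map a ↦ (1/2) ‖y_j − N a‖₂² + γ₂ u_j ‖a‖₂ over ℝⁿ;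 equivalently, f(A) equals Σ_{j=1}^p [(1/2) ‖y_j − N a_j‖₂² + γ₂ u_j ‖a_j‖₂] plus a constant not depending on A. -/

import Mathlib

open Finset Matrix

noncomputable section

/-- The edge set `ℰ = {(i₁,i₂) : 1 ≤ i₁ < i₂ ≤ n}`. -/
def edges (n : ℕ) : Finset (Fin n × Fin n) :=
  Finset.univ.filter fun l => l.1 < l.2

/-- The objective `f(A) = (1/2)∑_j ‖x_j − a_j‖₂² + (ν/2)∑_{l∈ℰ} ‖ṽ_l − A_{i₁·} + A_{i₂·}‖₂²
 + γ₂ ∑_j u_j ‖a_j‖₂` of the A-update of S-ADMM. -/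
def fObj (n p : ℕ) (ν γ₂ : ℝ) (u : Fin p → ℝ) (x : Fin p → Fin n → ℝ)
    (vt : Fin n × Fin n → Fin p → ℝ) (A : Matrix (Fin n) (Fin p) ℝ) : ℝ :=
  (1 / 2) * ∑ j, (∑ i, (x j i - A i j) ^ 2)
    + (ν / 2) * ∑ l ∈ edges n, (∑ j, (vt l j - A l.1 j + A l.2 j) ^ 2)
    + γ₂ * ∑ j, u j * Real.sqrt (∑ i, (A i j) ^ 2)

/-- The matrix `N = √(1+nν) I_n − ((√(1+nν) − 1)/n) 1_n 1_nᵀ`. -/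
def Nmat (n : ℕ) (ν : ℝ) : Matrix (Fin n) (Fin n) ℝ :=
  Real.sqrt (1 + (n : ℝ) * ν) • (1 : Matrix (Fin n) (Fin n) ℝ)
    - ((Real.sqrt (1 + (n : ℝ) * ν) - 1) / (n : ℝ)) •
        Matrix.vecMulVec (fun _ : Fin n => (1 : ℝ)) (fun _ : Fin n => (1 : ℝ))

/-- The inverse `N⁻¹ = (1+nν)^{−1/2} [I_n + n^{−1}(√(1+nν) − 1) 1_n 1_nᵀ]`. -/
def NmatInv (n : ℕ) (ν : ℝ) : Matrix (Fin n) (Fin n) ℝ :=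
  ((1 + (n : ℝ) * ν) ^ (-(1 / 2 : ℝ))) •
    ((1 : Matrix (Fin n) (Fin n) ℝ)
      + ((n : ℝ)⁻¹ * (Real.sqrt (1 + (n : ℝ) * ν) - 1)) •
          Matrix.vecMulVec (fun _ : Fin n => (1 : ℝ)) (fun _ : Fin n => (1 : ℝ)))

/-- The pseudo-responses `y_j = N⁻¹ [x_j + ν ∑_{l∈ℰ} ṽ_{jl}(e_{i₁} − e_{i₂})]`. -/
def yvec (n p : ℕ) (ν : ℝ) (x : Fin p → Fin n → ℝ)
    (vt : Fin n × Fin n → Fin p → ℝ) (j : Fin p) : Fin n → ℝ :=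
  (NmatInv n ν).mulVec (fun i => x j i
    + ν * ∑ l ∈ edges n, vt l j * ((if i = l.1 then (1 : ℝ) else 0) - (if i = l.2 then 1 else 0)))

/-- The `j`-th group-lasso pseudo-regression objective
`g_j(a) = (1/2)‖y_j − N a‖₂² + γ₂ u_j ‖a‖₂`. -/
def gObj (n p : ℕ) (ν γ₂ : ℝ) (u : Fin p → ℝ) (x : Fin p → Fin n → ℝ)
    (vt : Fin n × Fin n → Fin p → ℝ) (j : Fin p) (a : Fin n → ℝ) : ℝ :=
  (1 / 2) * ∑ i, (yvec n p ν x vt j i - (Nmat n ν).mulVec a i) ^ 2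
    + γ₂ * u j * Real.sqrt (∑ i, (a i) ^ 2)

section Aux

lemma edge_sum_eq (n : ℕ) (F : Fin n × Fin n → ℝ) (hsym : ∀ l : Fin n × Fin n, F (l.2, l.1) = F l)
    (hdiag : ∀ i, F (i,i) = 0) :
    ∑ i, ∑ k, F (i,k) = 2 * ∑ l ∈ edges n, F l := by
  have h1 : ∑ i, ∑ k, F (i,k) = ∑ l : Fin n × Fin n, F l := by
    rw [← Finset.sum_product']; rfl
  rw [h1, ← Finset.sum_filter_add_sum_filter_not Finset.univ (fun l => l.1 < l.2) F,
    ← Finset.sum_filter_add_sum_filter_not (Finset.univ.filter fun l : Fin n × Fin n => ¬ l.1 < l.2)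
      (fun l => l.2 < l.1) F]
  have h2 : ∑ l ∈ ((Finset.univ.filter fun l : Fin n × Fin n => ¬ l.1 < l.2).filter
      fun l => l.2 < l.1), F l = ∑ l ∈ edges n, F l := by
    apply Finset.sum_nbij' (fun l => (l.2, l.1)) (fun l => (l.2, l.1)) <;>
      simp +contextual [edges, hsym, Prod.ext_iff]
    · intro a b h; exact le_of_lt h
  have h3 : ∑ l ∈ ((Finset.univ.filter fun l : Fin n × Fin n => ¬ l.1 < l.2).filter
      fun l => ¬ l.2 < l.1), F l = 0 := by
    apply Finset.sum_eq_zero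
    intro l hl
    simp only [Finset.mem_filter, not_lt] at hl
    have : l.1 = l.2 := le_antisymm hl.2 hl.1.2
    rw [show l = (l.1, l.2) from rfl, this]; exact hdiag l.2
  rw [h2, h3, edges]; ring

lemma edge_sq (n : ℕ) (a : Fin n → ℝ) :
    2 * ∑ l ∈ edges n, (a l.1 - a l.2) ^ 2
      = 2 * ((n : ℝ) * ∑ i, (a i) ^ 2 - (∑ i, a i) ^ 2) := by
  rw [← edge_sum_eq n (fun l => (a l.1 - a l.2) ^ 2) (fun l => by ring) (fun i => by ring)]
  have e : ∀ i k : Fin n, (a i - a k) ^ 2 = (a i) ^ 2 - 2 * (a i * a k) + (a k) ^ 2 :=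
    fun i k => by ring
  simp_rw [e]
  rw [Finset.sum_comm (f := fun i k => (a i)^2 - 2*(a i * a k) + (a k)^2)]
  simp_rw [Finset.sum_add_distrib, Finset.sum_sub_distrib, Finset.sum_const, Finset.card_univ,
    Fintype.card_fin, ← Finset.mul_sum, ← Finset.sum_mul, nsmul_eq_mul]
  rw [← Finset.mul_sum, ← Finset.mul_sum]
  ring

lemma Nmat_mulVec (n : ℕ) (ν : ℝ) (a : Fin n → ℝ) (i : Fin n) :
    (Nmat n ν).mulVec a i = Real.sqrt (1 + (n : ℝ) * ν) * a i
      - ((Real.sqrt (1 + (n : ℝ) * ν) - 1) / (n : ℝ)) * ∑ k, a k := by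
  simp [Nmat, mulVec, dotProduct, vecMulVec_apply, Matrix.sub_apply, Matrix.smul_apply, one_apply,
    sub_mul, mul_ite, Finset.sum_sub_distrib, Finset.mul_sum, mul_assoc]

lemma NmatInv_mulVec (n : ℕ) (ν : ℝ) (a : Fin n → ℝ) (i : Fin n) :
    (NmatInv n ν).mulVec a i = ((1 + (n : ℝ) * ν) ^ (-(1 / 2 : ℝ))) * (a i
      + ((n : ℝ)⁻¹ * (Real.sqrt (1 + (n : ℝ) * ν) - 1)) * ∑ k, a k) := by
  simp [NmatInv, mulVec, dotProduct, vecMulVec_apply, Matrix.add_apply, Matrix.smul_apply, one_apply,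
    add_mul, mul_ite, Finset.sum_add_distrib, Finset.mul_sum, mul_add, mul_assoc]

lemma N_Ninv_mulVec (n : ℕ) (hn : 1 ≤ n) (ν : ℝ) (hν : 0 < ν) (z : Fin n → ℝ) :
    (Nmat n ν).mulVec ((NmatInv n ν).mulVec z) = z := by
  have hpos : (0:ℝ) < 1 + (n : ℝ) * ν := by positivity
  set s := Real.sqrt (1 + (n : ℝ) * ν) with hs
  have hspos : 0 < s := Real.sqrt_pos.mpr hpos
  have hr : ((1 + (n : ℝ) * ν) ^ (-(1 / 2 : ℝ))) = s⁻¹ := by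
    rw [Real.rpow_neg hpos.le, hs, Real.sqrt_eq_rpow]
  have hnpos : (0:ℝ) < (n : ℝ) := by exact_mod_cast Nat.pos_of_ne_zero (by omega)
  funext i
  rw [Nmat_mulVec]
  simp_rw [NmatInv_mulVec, hr]
  have hZ : ∑ x : Fin n, s⁻¹ * (z x + (↑n)⁻¹ * (s - 1) * ∑ k, z k)
      = s⁻¹ * ((∑ k, z k) + (↑n)⁻¹ * (s - 1) * ((n:ℝ) * ∑ k, z k)) := by
    simp [Finset.sum_add_distrib, ← Finset.mul_sum, Finset.sum_const, Finset.card_univ, mul_add]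
    ring
  rw [hZ]
  field_simp
  ring

lemma quad_sum (n : ℕ) (hn : 1 ≤ n) (ν : ℝ) (hν : 0 < ν) (a : Fin n → ℝ) :
    ∑ i, ((Nmat n ν).mulVec a i) ^ 2
      = (1 + (n : ℝ) * ν) * ∑ i, (a i) ^ 2 - ν * (∑ i, a i) ^ 2 := by
  have hpos : (0:ℝ) < 1 + (n : ℝ) * ν := by positivity
  have hnpos : (0:ℝ) < (n : ℝ) := by exact_mod_cast Nat.pos_of_ne_zero (by omega)
  set s := Real.sqrt (1 + (n : ℝ) * ν) with hs
  set t := (s - 1) / (n : ℝ) with ht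
  have hs2 : s ^ 2 = 1 + (n : ℝ) * ν := Real.sq_sqrt hpos.le
  simp_rw [Nmat_mulVec, ← hs, ← ht]
  have e1 : ∀ i, (s * a i - t * ∑ k, a k) ^ 2
      = s ^ 2 * (a i) ^ 2 - (2 * s * t * ∑ k, a k) * a i + t ^ 2 * (∑ k, a k) ^ 2 := by
    intro i; ring
  simp_rw [e1]
  rw [Finset.sum_add_distrib, Finset.sum_sub_distrib, Finset.sum_const, Finset.card_univ,
    Fintype.card_fin, ← Finset.mul_sum, ← Finset.mul_sum, nsmul_eq_mul, ← hs2, ht]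
  field_simp
  linear_combination (-(∑ k, a k)^2) * hs2

lemma dot_NmulVec (n : ℕ) (ν : ℝ) (b c : Fin n → ℝ) :
    ∑ i, b i * (Nmat n ν).mulVec c i
      = Real.sqrt (1 + (n : ℝ) * ν) * ∑ i, b i * c i
        - ((Real.sqrt (1 + (n : ℝ) * ν) - 1) / (n : ℝ)) * ((∑ i, b i) * ∑ i, c i) := by
  set s := Real.sqrt (1 + (n : ℝ) * ν) with hs
  set t := (s - 1) / (n : ℝ) with ht
  simp_rw [Nmat_mulVec, ← hs, ← ht]
  have e1 : ∀ i, b i * (s * c i - t * ∑ k, c k)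
      = s * (b i * c i) - (t * ∑ k, c k) * b i := by intro i; ring
  simp_rw [e1]
  rw [Finset.sum_sub_distrib, ← Finset.mul_sum, ← Finset.mul_sum]
  ring

lemma sym_sum (n : ℕ) (ν : ℝ) (y a : Fin n → ℝ) :
    ∑ i, y i * (Nmat n ν).mulVec a i = ∑ i, (Nmat n ν).mulVec y i * a i := by
  have h1 := dot_NmulVec n ν y a
  have h2 := dot_NmulVec n ν a y
  simp_rw [mul_comm] at h2 ⊢
  rw [h1, h2]
  ring

lemma zdot (n p : ℕ) (ν : ℝ) (x : Fin p → Fin n → ℝ) (vt : Fin n × Fin n → Fin p → ℝ)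
    (j : Fin p) (a : Fin n → ℝ) :
    ∑ i, (x j i + ν * ∑ l ∈ edges n, vt l j *
        ((if i = l.1 then (1:ℝ) else 0) - (if i = l.2 then 1 else 0))) * a i
      = ∑ i, x j i * a i + ν * ∑ l ∈ edges n, vt l j * (a l.1 - a l.2) := by
  simp_rw [add_mul, Finset.sum_add_distrib, mul_assoc ν, ← Finset.mul_sum, Finset.sum_mul]
  congr 2
  rw [Finset.sum_comm]
  apply Finset.sum_congr rfl
  intro l hl
  have hlt : l.1 < l.2 := by simpa [edges] using hl
  have e : ∀ xx : Fin n, vt l j * ((if xx = l.1 then (1:ℝ) else 0)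
      - if xx = l.2 then 1 else 0) * a xx
      = (if xx = l.1 then vt l j * a xx else 0) - (if xx = l.2 then vt l j * a xx else 0) := by
    intro xx; by_cases h1 : xx = l.1 <;> by_cases h2 : xx = l.2 <;> simp [h1, h2, hlt.ne, hlt.ne'] <;> ring
  simp_rw [e, Finset.sum_sub_distrib]
  simp
  ring

/-- per-column constant. -/
def cconst (n p : ℕ) (ν : ℝ) (x : Fin p → Fin n → ℝ)
    (vt : Fin n × Fin n → Fin p → ℝ) (j : Fin p) : ℝ :=
  (1/2) * ∑ i, (x j i) ^ 2 + (ν/2) * ∑ l ∈ edges n, (vt l j) ^ 2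
    - (1/2) * ∑ i, (yvec n p ν x vt j i) ^ 2

lemma col_id (n p : ℕ) (hn : 1 ≤ n) (ν : ℝ) (hν : 0 < ν)
    (x : Fin p → Fin n → ℝ) (vt : Fin n × Fin n → Fin p → ℝ) (j : Fin p) (a : Fin n → ℝ) :
    (1/2) * (∑ i, (x j i - a i) ^ 2)
      + (ν/2) * ∑ l ∈ edges n, (vt l j - a l.1 + a l.2) ^ 2
    = (1/2) * ∑ i, (yvec n p ν x vt j i - (Nmat n ν).mulVec a i) ^ 2
      + cconst n p ν x vt j := by
  set y := yvec n p ν x vt j with hy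
  have hNy : (Nmat n ν).mulVec y = fun i => x j i + ν * ∑ l ∈ edges n, vt l j *
      ((if i = l.1 then (1:ℝ) else 0) - (if i = l.2 then 1 else 0)) := by
    rw [hy, yvec, N_Ninv_mulVec n hn ν hν]
  have hlin : ∑ i, y i * (Nmat n ν).mulVec a i
      = ∑ i, x j i * a i + ν * ∑ l ∈ edges n, vt l j * (a l.1 - a l.2) := by
    rw [sym_sum, hNy]
    exact zdot n p ν x vt j a
  have E1 : ∑ i, (x j i - a i) ^ 2
      = ∑ i, (x j i) ^ 2 - 2 * ∑ i, x j i * a i + ∑ i, (a i) ^ 2 := by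
    have e : ∀ i, (x j i - a i) ^ 2 = (x j i) ^ 2 - 2 * (x j i * a i) + (a i) ^ 2 :=
      fun i => by ring
    simp_rw [e]
    rw [Finset.sum_add_distrib, Finset.sum_sub_distrib, ← Finset.mul_sum]
  have E2 : ∑ l ∈ edges n, (vt l j - a l.1 + a l.2) ^ 2
      = ∑ l ∈ edges n, (vt l j) ^ 2 - 2 * ∑ l ∈ edges n, vt l j * (a l.1 - a l.2)
        + ∑ l ∈ edges n, (a l.1 - a l.2) ^ 2 := by
    have e : ∀ l : Fin n × Fin n, (vt l j - a l.1 + a l.2) ^ 2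
        = (vt l j) ^ 2 - 2 * (vt l j * (a l.1 - a l.2)) + (a l.1 - a l.2) ^ 2 :=
      fun l => by ring
    simp_rw [e]
    rw [Finset.sum_add_distrib, Finset.sum_sub_distrib, ← Finset.mul_sum]
  have E3 : ∑ i, (y i - (Nmat n ν).mulVec a i) ^ 2
      = ∑ i, (y i) ^ 2 - 2 * ∑ i, y i * (Nmat n ν).mulVec a i
        + ∑ i, ((Nmat n ν).mulVec a i) ^ 2 := by
    have e : ∀ i, (y i - (Nmat n ν).mulVec a i) ^ 2
        = (y i) ^ 2 - 2 * (y i * (Nmat n ν).mulVec a i) + ((Nmat n ν).mulVec a i) ^ 2 :=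
      fun i => by ring
    simp_rw [e]
    rw [Finset.sum_add_distrib, Finset.sum_sub_distrib, ← Finset.mul_sum]
  rw [E1, E2, E3, hlin, quad_sum n hn ν hν a, cconst]
  have hedge := edge_sq n a
  linear_combination (ν/4) * hedge

end Aux

/-- `A` minimizes `f` over `ℝ^{n×p}` if and only if each column `a_j`
minimizes the group-lasso pseudo-regression objective `g_j`; equivalently, `f(A)` equals
`∑_j g_j(a_j)` plus a constant not depending on `A`. -/
theorem stmt1 (n p : ℕ) (hn : 1 ≤ n) (hp : 1 ≤ p) (ν : ℝ) (hν : 0 < ν)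
    (γ₂ : ℝ) (hγ₂ : 0 ≤ γ₂) (u : Fin p → ℝ) (hu : ∀ j, 0 ≤ u j)
    (x : Fin p → Fin n → ℝ) (vt : Fin n × Fin n → Fin p → ℝ) :
    (∀ A : Matrix (Fin n) (Fin p) ℝ,
        (∀ B, fObj n p ν γ₂ u x vt A ≤ fObj n p ν γ₂ u x vt B)
          ↔ (∀ j : Fin p, ∀ a : Fin n → ℝ,
              gObj n p ν γ₂ u x vt j (fun i => A i j) ≤ gObj n p ν γ₂ u x vt j a))
    ∧ ∃ c : ℝ, ∀ A : Matrix (Fin n) (Fin p) ℝ,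
        fObj n p ν γ₂ u x vt A = (∑ j, gObj n p ν γ₂ u x vt j (fun i => A i j)) + c := by
  have key : ∀ A : Matrix (Fin n) (Fin p) ℝ, fObj n p ν γ₂ u x vt A
      = (∑ j, gObj n p ν γ₂ u x vt j (fun i => A i j)) + ∑ j, cconst n p ν x vt j := by
    intro A
    unfold fObj gObj
    rw [show (∑ l ∈ edges n, ∑ j, (vt l j - A l.1 j + A l.2 j) ^ 2)
        = ∑ j, ∑ l ∈ edges n, (vt l j - A l.1 j + A l.2 j) ^ 2 from Finset.sum_comm,
      Finset.mul_sum, Finset.mul_sum, Finset.mul_sum, ← Finset.sum_add_distrib,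
      ← Finset.sum_add_distrib, ← Finset.sum_add_distrib]
    apply Finset.sum_congr rfl
    intro j _
    have h := col_id n p hn ν hν x vt j (fun i => A i j)
    linear_combination h
  constructor
  · intro A
    constructor
    · intro hmin j a
      have hB := hmin (A.updateCol j a)
      rw [key A, key (A.updateCol j a)] at hB
      have h1 : ∑ j', gObj n p ν γ₂ u x vt j' (fun i => A i j')
          ≤ ∑ j', gObj n p ν γ₂ u x vt j' (fun i => A.updateCol j a i j') := by linarith
      rw [← Finset.add_sum_erase _ _ (Finset.mem_univ j),
        ← Finset.add_sum_erase _ _ (Finset.mem_univ j)] at h1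
      have h2 : ∑ j' ∈ Finset.univ.erase j,
            gObj n p ν γ₂ u x vt j' (fun i => A.updateCol j a i j')
          = ∑ j' ∈ Finset.univ.erase j, gObj n p ν γ₂ u x vt j' (fun i => A i j') := by
        apply Finset.sum_congr rfl
        intro j' hj'
        congr 1
        funext i
        rw [Matrix.updateCol_apply, if_neg (Finset.ne_of_mem_erase hj')]
      rw [h2] at h1
      have h3 : (fun i => A.updateCol j a i j) = a := by
        funext i; rw [Matrix.updateCol_apply, if_pos rfl]
      rw [h3] at h1
      linarith
    · intro hcol B
      rw [key A, key B]
      have := Finset.sum_le_sum (fun j (_ : j ∈ Finset.univ) => hcol j (fun i => B i j))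
      linarith
  · exact ⟨∑ j, cconst n p ν x vt j, key⟩
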